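/- Let p ≡ 2 (mod 3) be an odd prime and define the rational number D_p = det[1/(i² - ij + j²)]_{1≤i,j≤p-1} (determinant of the rational matrix). Then 2·D_p, viewed as a p-adic integer/rational with denominator coprime to p, is a quadratic residue modulo p. -/

import Mathlib

open Matrix Finset Equiv

namespace S18

/-- sign of a fixed-point-free involution -/
lemma sign_involution {α : Type*} [Fintype α] [DecidableEq α] (σ : Equiv.Perm α)
    (h2 : σ * σ = 1) (hfp : ∀ x, σ x ≠ x) :
    Equiv.Perm.sign σ = (-1) ^ (Fintype.card α / 2) := by
  have horder : orderOf σ ∣ 2 := orderOf_dvd_of_pow_eq_one (by rw [pow_two]; exact h2)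
  have hmem : ∀ n ∈ σ.cycleType, n = 2 := by
    intro n hn
    have h1 : n ∣ orderOf σ := by
      rw [← Equiv.Perm.lcm_cycleType]; exact Multiset.dvd_lcm hn
    have h2' : 2 ≤ n := Equiv.Perm.two_le_of_mem_cycleType hn
    have h3 := Nat.le_of_dvd (by norm_num) (h1.trans horder)
    omega
  have hrep : σ.cycleType = Multiset.replicate (Multiset.card σ.cycleType) 2 :=
    Multiset.eq_replicate_of_mem hmem
  have hsupp : σ.support = Finset.univ := by
    rw [Finset.eq_univ_iff_forall]; intro x; rw [Equiv.Perm.mem_support]; exact hfp x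
  have hsum : σ.cycleType.sum = Fintype.card α := by
    rw [Equiv.Perm.sum_cycleType, hsupp, Finset.card_univ]
  have hsum2 : σ.cycleType.sum = 2 * Multiset.card σ.cycleType := by
    rw [hrep]; simp [Multiset.sum_replicate, mul_comm]
  have hcard : Multiset.card σ.cycleType = Fintype.card α / 2 := by omega
  rw [Equiv.Perm.sign_of_cycleType, hsum, hcard]
  have : Fintype.card α = 2 * (Fintype.card α / 2) := by omega
  rw [this]; rw [pow_add, pow_mul]
  simp

variable (p : ℕ) [Fact p.Prime]

lemma hp5 (hodd : Odd p) (h3 : p % 3 = 2) : 5 ≤ p := by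
  have hp := (Fact.out : p.Prime)
  have h2 := hp.two_le
  rw [Nat.odd_iff] at hodd
  rcases Nat.lt_or_ge p 5 with h | h
  · interval_cases p <;> omega
  · exact h

lemma two_ne_zero' (hp : 5 ≤ p) : (2 : ZMod p) ≠ 0 := by
  have : ((2 : ℕ) : ZMod p) ≠ 0 := by
    rw [Ne, ZMod.natCast_eq_zero_iff]
    intro h
    have := Nat.le_of_dvd (by norm_num) h
    omega
  simpa using this

lemma three_ne_zero' (hp : 5 ≤ p) : (3 : ZMod p) ≠ 0 := by
  have : ((3 : ℕ) : ZMod p) ≠ 0 := by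
    rw [Ne, ZMod.natCast_eq_zero_iff]
    intro h
    have := Nat.le_of_dvd (by norm_num) h
    omega
  simpa using this

section Units

variable {p}

/-- negation on units has no fixed points -/
lemma neg_perm_sign (hp : 5 ≤ p) :
    Equiv.Perm.sign (Equiv.neg (ZMod p)ˣ) = (-1) ^ ((p - 1) / 2) := by
  have := sign_involution (Equiv.neg (ZMod p)ˣ)
    (by ext x; simp) (by
      intro x hx
      have hx' : (-x : (ZMod p)ˣ) = x := hx
      have : ((-x : (ZMod p)ˣ) : ZMod p) = (x : ZMod p) := by rw [hx']
      rw [Units.val_neg] at this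
      have h2 : (2 : ZMod p) * (x : ZMod p) = 0 := by linear_combination -this
      rcases mul_eq_zero.1 h2 with h | h
      · exact two_ne_zero' p hp h
      · exact x.ne_zero h)
  rwa [ZMod.card_units] at this

end Units

section Main

variable {p : ℕ} [Fact p.Prime]

lemma entry_identity (m : ℕ) (hp : 5 ≤ p) (hm : 3 * m = 2 * p - 1) (u v : (ZMod p)ˣ) :
    (((u : ZMod p))^(2*m) + (u : ZMod p)^m * (v : ZMod p)^m + ((v : ZMod p))^(2*m))⁻¹
      = (∑ k ∈ range m, (u : ZMod p)^k * (v : ZMod p)^(m-1-k))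
        + (if u = v then 2 * (3 : ZMod p)⁻¹ * (u : ZMod p)^(m-1) else 0) := by
  have h3 : (3 : ZMod p) ≠ 0 := by
    have : ((3 : ℕ) : ZMod p) ≠ 0 := by
      rw [Ne, ZMod.natCast_eq_zero_iff]
      intro h; have := Nat.le_of_dvd (by norm_num) h; omega
    simpa using this
  have hq : ∀ w : (ZMod p)ˣ, (w : ZMod p)^(p-1) = 1 := fun w =>
    ZMod.pow_card_sub_one_eq_one w.ne_zero
  have hcube : ∀ w : (ZMod p)ˣ, ((w : ZMod p)^m)^3 = (w : ZMod p) := by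
    intro w
    rw [← pow_mul]
    have h : m * 3 = (p-1) * 2 + 1 := by omega
    rw [h, pow_succ, pow_mul, hq, one_pow, one_mul]
  have hm3 : (3 : ZMod p) * (m : ZMod p) = -1 := by
    have h1 : (3*m + 1 : ℕ) = 2*p := by omega
    have h2 : ((3*m+1 : ℕ) : ZMod p) = ((2*p : ℕ) : ZMod p) := by rw [h1]
    push_cast [ZMod.natCast_self] at h2
    linear_combination h2
  have hx2 : (u : ZMod p)^(2*m) = ((u : ZMod p)^m)^2 := by rw [← pow_mul, mul_comm]
  have hy2 : (v : ZMod p)^(2*m) = ((v : ZMod p)^m)^2 := by rw [← pow_mul, mul_comm]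
  rw [hx2, hy2]
  by_cases huv : u = v
  · subst huv
    rw [if_pos rfl]
    have hsum : (∑ k ∈ range m, (u : ZMod p)^k * (u : ZMod p)^(m-1-k))
        = (m : ZMod p) * (u : ZMod p)^(m-1) := by
      rw [Finset.sum_congr rfl (fun k hk => ?_), Finset.sum_const, Finset.card_range,
        nsmul_eq_mul]
      rw [← pow_add]
      congr 1
      have := Finset.mem_range.1 hk
      omega
    rw [hsum]
    have hinv : (u : ZMod p)^(m-1) * ((u : ZMod p)^m)^2 = 1 := by
      rw [← pow_mul, ← pow_add]
      have h : m - 1 + m * 2 = (p-1) * 2 := by omega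
      rw [h, pow_mul, hq, one_pow]
    have hum : (u : ZMod p)^(m-1) = (((u : ZMod p)^m)^2)⁻¹ := eq_inv_of_mul_eq_one_left hinv
    have hcomb : ((u:ZMod p)^m)^2 + (u:ZMod p)^m * (u:ZMod p)^m + ((u:ZMod p)^m)^2
        = 3 * ((u:ZMod p)^m)^2 := by ring
    rw [hcomb, hum]
    have hxne : ((u : ZMod p)^m)^2 ≠ 0 := pow_ne_zero _ (pow_ne_zero _ u.ne_zero)
    field_simp
    linear_combination -hm3
  · rw [if_neg huv, add_zero]
    have hxyne : (u : ZMod p) ≠ (v : ZMod p) := fun h => huv (Units.ext h)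
    have hxy : (u : ZMod p)^m ≠ (v : ZMod p)^m := fun h => hxyne (by
      rw [← hcube u, ← hcube v, h])
    have hfac : (u : ZMod p) - (v : ZMod p)
        = ((u : ZMod p)^m - (v : ZMod p)^m)
          * (((u : ZMod p)^m)^2 + (u : ZMod p)^m * (v : ZMod p)^m + ((v : ZMod p)^m)^2) := by
      conv_lhs => rw [← hcube u, ← hcube v]
      ring
    have hqne : ((u : ZMod p)^m)^2 + (u : ZMod p)^m * (v : ZMod p)^m + ((v : ZMod p)^m)^2 ≠ 0 := by
      intro h0
      apply sub_ne_zero.2 hxyne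
      rw [hfac, h0, mul_zero]
    have huvne : (u : ZMod p) - (v : ZMod p) ≠ 0 := sub_ne_zero.2 hxyne
    apply mul_right_cancel₀ huvne
    rw [geom_sum₂_mul]
    rw [hfac, mul_comm ((u:ZMod p)^m - (v:ZMod p)^m), ← mul_assoc, inv_mul_cancel₀ hqne, one_mul]

lemma detB_eq (m : ℕ) (hp : 5 ≤ p) (hm : 3 * m = 2 * p - 1) (hmodd : Odd m) :
    (Matrix.of fun u v : (ZMod p)ˣ =>
      (((u : ZMod p))^(2*m) + (u : ZMod p)^m * (v : ZMod p)^m + ((v : ZMod p))^(2*m))⁻¹).det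
    = (2 * (3 : ZMod p)⁻¹)^(p-1) * (-(2 : ZMod p)⁻¹)^m := by
  classical
  have h2 : (2 : ZMod p) ≠ 0 := by
    have : ((2 : ℕ) : ZMod p) ≠ 0 := by
      rw [Ne, ZMod.natCast_eq_zero_iff]
      intro h; have := Nat.le_of_dvd (by norm_num) h; omega
    simpa using this
  have h3 : (3 : ZMod p) ≠ 0 := by
    have : ((3 : ℕ) : ZMod p) ≠ 0 := by
      rw [Ne, ZMod.natCast_eq_zero_iff]
      intro h; have := Nat.le_of_dvd (by norm_num) h; omega
    simpa using this
  have hq : ∀ w : (ZMod p)ˣ, (w : ZMod p)^(p-1) = 1 := fun w =>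
    ZMod.pow_card_sub_one_eq_one w.ne_zero
  have hmlt : m < p - 1 := by omega
  have hmpos : 0 < m := by omega
  set B : Matrix (ZMod p)ˣ (ZMod p)ˣ (ZMod p) := Matrix.of fun u v : (ZMod p)ˣ =>
      (((u : ZMod p))^(2*m) + (u : ZMod p)^m * (v : ZMod p)^m + ((v : ZMod p))^(2*m))⁻¹ with hBdef
  set U : Matrix (ZMod p)ˣ (Fin m) (ZMod p) := Matrix.of fun u k => (u : ZMod p)^(k:ℕ) with hU
  set W : Matrix (Fin m) (ZMod p)ˣ (ZMod p) := Matrix.of fun k v => (v : ZMod p)^(m-1-(k:ℕ)) with hW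
  set D : Matrix (ZMod p)ˣ (ZMod p)ˣ (ZMod p) :=
      Matrix.diagonal (fun u => 2 * (3 : ZMod p)⁻¹ * (u : ZMod p)^(m-1)) with hD
  set Dinv : Matrix (ZMod p)ˣ (ZMod p)ˣ (ZMod p) :=
      Matrix.diagonal (fun u => (2 : ZMod p)⁻¹ * 3 * (u : ZMod p)^(p-m)) with hDinv
  have hB : B = U * W + D := by
    ext u v
    rw [hBdef]
    simp only [Matrix.of_apply, Matrix.add_apply, Matrix.mul_apply, hU, hW,
      Matrix.diagonal_apply]
    rw [entry_identity m hp hm u v]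
    congr 1
    · rw [Fin.sum_univ_eq_sum_range (fun k => (u : ZMod p)^k * (v : ZMod p)^(m-1-k))]
  have hDD : D * Dinv = 1 := by
    have hfun : (fun u : (ZMod p)ˣ =>
        2 * (3 : ZMod p)⁻¹ * (u : ZMod p)^(m-1) * ((2:ZMod p)⁻¹ * 3 * (u : ZMod p)^(p-m)))
        = fun _ => (1 : ZMod p) := by
      funext u
      have hsplit : 2 * (3 : ZMod p)⁻¹ * (u : ZMod p)^(m-1) * ((2:ZMod p)⁻¹ * 3 * (u : ZMod p)^(p-m))
          = (2 * 2⁻¹) * ((3:ZMod p)⁻¹ * 3) * ((u : ZMod p)^(m-1) * (u : ZMod p)^(p-m)) := by ring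
      rw [hsplit, mul_inv_cancel₀ h2, inv_mul_cancel₀ h3, ← pow_add]
      have he : m - 1 + (p - m) = p - 1 := by omega
      rw [he, hq, one_mul, one_mul]
    rw [hD, hDinv, Matrix.diagonal_mul_diagonal, hfun, Matrix.diagonal_one]
  have hBD : B = D * (1 + Dinv * (U * W)) := by
    rw [mul_add, mul_one, ← mul_assoc, hDD, one_mul, add_comm, hB]
  have hQ : W * (Dinv * U) = (-(2⁻¹ * 3) : ZMod p) • (1 : Matrix (Fin m) (Fin m) (ZMod p)) := by
    ext l k
    rw [Matrix.mul_apply]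
    simp only [hDinv, Matrix.diagonal_mul, hU, hW, Matrix.of_apply, Matrix.smul_apply,
      Matrix.one_apply, smul_eq_mul]
    have hterm : ∀ u : (ZMod p)ˣ,
        (u : ZMod p)^(m-1-(l:ℕ)) * ((2:ZMod p)⁻¹ * 3 * (u : ZMod p)^(p-m) * (u : ZMod p)^(k:ℕ))
        = (2:ZMod p)⁻¹ * 3 * (u : ZMod p)^((m-1-(l:ℕ)) + ((p-m) + (k:ℕ))) := by
      intro u; rw [pow_add, pow_add]; ring
    rw [Finset.sum_congr rfl (fun u _ => hterm u), ← Finset.mul_sum]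
    have hsum : ∑ u : (ZMod p)ˣ, (u : ZMod p)^((m-1-(l:ℕ)) + ((p-m) + (k:ℕ)))
        = if (k : ℕ) = (l : ℕ) then (-1 : ZMod p) else 0 := by
      rw [FiniteField.sum_pow_units, ZMod.card]
      have hl := l.isLt
      have hk := k.isLt
      by_cases hkl : (k : ℕ) = (l : ℕ)
      · have he : m - 1 - (l:ℕ) + (p - m + (k:ℕ)) = p - 1 := by omega
        rw [if_pos hkl, if_pos (he ▸ dvd_refl _)]
      · rw [if_neg hkl, if_neg]
        rintro ⟨c, hc⟩
        match c with
        | 0 => omega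
        | 1 => omega
        | (c+2) =>
          have hmul : (p-1)*2 ≤ (p-1)*(c+2) := Nat.mul_le_mul_left _ (by omega)
          omega
    rw [hsum]
    by_cases hkl : l = k
    · subst hkl; rw [if_pos rfl, if_pos rfl]; ring
    · rw [if_neg (fun h => hkl (Fin.ext h).symm), if_neg hkl, mul_zero, mul_zero]
  have hdet1 : (1 + Dinv * (U * W)).det = (1 + W * (Dinv * U)).det := by
    rw [← Matrix.mul_assoc]
    exact Matrix.det_one_add_mul_comm _ _
  have hdet2 : (1 + W * (Dinv * U)).det = (-(2:ZMod p)⁻¹)^m := by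
    rw [hQ]
    have : (1 : Matrix (Fin m) (Fin m) (ZMod p)) + (-(2⁻¹ * 3) : ZMod p) • 1
        = ((1 - 2⁻¹ * 3 : ZMod p)) • (1 : Matrix (Fin m) (Fin m) (ZMod p)) := by
      rw [sub_smul, one_smul, neg_smul, ← sub_eq_add_neg, sub_eq_add_neg, ← neg_smul]
    rw [this, Matrix.det_smul, Matrix.det_one, mul_one, Fintype.card_fin]
    congr 1
    field_simp
    ring
  have hdetD : D.det = (2 * (3 : ZMod p)⁻¹)^(p-1) := by
    rw [hD, Matrix.det_diagonal]
    rw [Finset.prod_mul_distrib, Finset.prod_const, Finset.prod_pow]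
    have hprod : ∏ u : (ZMod p)ˣ, (u : ZMod p) = -1 := by
      have := congrArg (Units.coeHom (ZMod p)) (FiniteField.prod_univ_units_id_eq_neg_one (K := ZMod p))
      rw [map_prod] at this
      simpa using this
    rw [hprod, Finset.card_univ, ZMod.card_units]
    have hev : Even (m - 1) := Nat.Odd.sub_odd hmodd odd_one
    rw [hev.neg_one_pow, mul_one]
  rw [hBD, Matrix.det_mul, hdet1, hdet2, hdetD]

lemma detN_eq (m : ℕ) (hp : 5 ≤ p) (hm : 3 * m = 2 * p - 1) (hmodd : Odd m) :
    (Matrix.of fun u v : (ZMod p)ˣ =>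
      ((u : ZMod p)^2 - (u : ZMod p)*(v : ZMod p) + (v : ZMod p)^2)⁻¹).det
    = (-1 : ZMod p)^((p-1)/2) * ((2 * (3 : ZMod p)⁻¹)^(p-1) * (-(2 : ZMod p)⁻¹)^m) := by
  classical
  have hGpow : ∀ u : (ZMod p)ˣ, u ^ (3*m) = u := by
    intro u
    have hcard : u ^ (p-1) = 1 := by
      rw [← ZMod.card_units p]; exact pow_card_eq_one
    rw [show 3*m = (p-1)*2+1 by omega, pow_succ, pow_mul, hcard, one_pow, one_mul]
  set N : Matrix (ZMod p)ˣ (ZMod p)ˣ (ZMod p) := Matrix.of fun u v : (ZMod p)ˣ =>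
      ((u : ZMod p)^2 - (u : ZMod p)*(v : ZMod p) + (v : ZMod p)^2)⁻¹ with hN
  set B : Matrix (ZMod p)ˣ (ZMod p)ˣ (ZMod p) := Matrix.of fun u v : (ZMod p)ˣ =>
      (((u : ZMod p))^(2*m) + (u : ZMod p)^m * (v : ZMod p)^m + ((v : ZMod p))^(2*m))⁻¹ with hB
  set c : (ZMod p)ˣ ≃ (ZMod p)ˣ :=
    ⟨fun u => u^m, fun u => u^3,
      fun u => by show (u^m)^3 = u; rw [← pow_mul, mul_comm]; exact hGpow u,
      fun u => by show (u^3)^m = u; rw [← pow_mul]; exact hGpow u⟩ with hc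
  set σ : Equiv.Perm (ZMod p)ˣ := Equiv.neg (ZMod p)ˣ with hσ
  have hsub : B = (N.submatrix c c).submatrix id σ := by
    ext u v
    simp only [hB, hN, hc, hσ, Matrix.submatrix_apply, Matrix.of_apply, id_eq,
      Equiv.neg_apply, Equiv.coe_fn_mk]
    rw [Odd.neg_pow hmodd, Units.val_pow_eq_pow_val, Units.val_neg, Units.val_pow_eq_pow_val]
    congr 1
    rw [mul_comm 2 m, pow_mul ((u : ZMod p)) m 2, pow_mul ((v : ZMod p)) m 2]
    ring
  have hdet : B.det = ((Equiv.Perm.sign σ : ℤ) : ZMod p) * N.det := by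
    rw [hsub, Matrix.det_permute', Matrix.det_submatrix_equiv_self]
  set ε : ZMod p := ((Equiv.Perm.sign σ : ℤ) : ZMod p) with hε
  have hε2 : ε * ε = 1 := by
    rw [hε, ← Int.cast_mul, ← Units.val_mul, Int.units_mul_self, Units.val_one, Int.cast_one]
  have hNdet : N.det = ε * B.det := by
    rw [hdet, ← mul_assoc, hε2, one_mul]
  have hεval : ε = (-1 : ZMod p)^((p-1)/2) := by
    rw [hε, hσ, neg_perm_sign hp]
    push_cast
    norm_num
  rw [hNdet, hεval, detB_eq m hp hm hmodd]

end Main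

lemma ratCast_div (p : ℕ) [Fact p.Prime] (a b : ℤ) (hb : ¬ (p:ℤ) ∣ b) :
    ((((a : ℚ) / (b : ℚ) : ℚ)) : ZMod p) = (a : ZMod p) * (b : ZMod p)⁻¹ := by
  have hb0 : b ≠ 0 := by rintro rfl; exact hb (dvd_zero _)
  have hbQ : (b : ℚ) ≠ 0 := Int.cast_ne_zero.mpr hb0
  set q : ℚ := (a:ℚ)/(b:ℚ) with hq
  have hdenb : (q.den : ℤ) ∣ b := by
    rw [hq, ← Rat.divInt_eq_div]; exact Rat.den_dvd a b
  have hden0 : q.den ≠ 0 := q.den_nz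
  have hcrossQ : (q.num : ℚ) * b = a * q.den := by
    have h1 : q * b = a := div_mul_cancel₀ _ hbQ
    rw [← Rat.num_div_den q] at h1
    field_simp at h1
    linear_combination h1
  have hcross : q.num * b = a * (q.den : ℤ) := by exact_mod_cast hcrossQ
  have hcrossK : (q.num : ZMod p) * (b : ZMod p) = (a : ZMod p) * ((q.den : ℤ) : ZMod p) := by
    exact_mod_cast congrArg (Int.cast : ℤ → ZMod p) hcross
  have hdenK : ((q.den : ℤ) : ZMod p) ≠ 0 := by
    rw [Ne, ZMod.intCast_zmod_eq_zero_iff_dvd]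
    intro hdvd
    exact hb (hdvd.trans hdenb)
  have hbK : ((b : ℤ) : ZMod p) ≠ 0 := by
    rw [Ne, ZMod.intCast_zmod_eq_zero_iff_dvd]
    exact hb
  rw [Rat.cast_def]
  have hdcast : ((q.den : ℕ) : ZMod p) = ((q.den : ℤ) : ZMod p) := by push_cast; ring
  have hdenN : ((q.den : ℕ) : ZMod p) ≠ 0 := by rw [hdcast]; exact hdenK
  rw [← div_eq_mul_inv, div_eq_div_iff hdenN hbK, hdcast]
  exact hcrossK

end S18

theorem stmt18 (p : ℕ) [Fact p.Prime] (hodd : Odd p) (h3 : p % 3 = 2) :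
    ∃ b : ZMod p, b ≠ 0 ∧
      ((2 * Matrix.det (Matrix.of fun i j : Fin (p - 1) =>
          (1 : ℚ) / ((((i : ℕ) + 1 : ℕ) ^ 2 - ((i : ℕ) + 1) * ((j : ℕ) + 1)
            + ((j : ℕ) + 1) ^ 2 : ℤ) : ℚ)) : ℚ) : ZMod p) = b ^ 2 := by
  classical
  have hp : 5 ≤ p := S18.hp5 p hodd h3
  have hpodd : p % 2 = 1 := Nat.odd_iff.mp hodd
  set m : ℕ := (2 * p - 1) / 3 with hmdef
  have hm : 3 * m = 2 * p - 1 := by omega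
  have hmodd : Odd m := Nat.odd_iff.mpr (by omega)
  have h2 : (2 : ZMod p) ≠ 0 := S18.two_ne_zero' p hp
  have h3' : (3 : ZMod p) ≠ 0 := S18.three_ne_zero' p hp
  set A : Matrix (Fin (p-1)) (Fin (p-1)) ℚ := Matrix.of fun i j : Fin (p - 1) =>
      (1 : ℚ) / ((((i : ℕ) + 1 : ℕ) ^ 2 - ((i : ℕ) + 1) * ((j : ℕ) + 1)
            + ((j : ℕ) + 1) ^ 2 : ℤ) : ℚ) with hA
  set N : Matrix (ZMod p)ˣ (ZMod p)ˣ (ZMod p) := Matrix.of fun u v : (ZMod p)ˣ =>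
      ((u : ZMod p)^2 - (u : ZMod p)*(v : ZMod p) + (v : ZMod p)^2)⁻¹ with hN
  -- nonvanishing of x² - xy + y² for units
  have hpowK : ∀ x : ZMod p, x ≠ 0 → (x^3)^m = x := by
    intro x hx
    rw [← pow_mul, show 3*m = (p-1)*2+1 by omega, pow_succ, pow_mul,
      ZMod.pow_card_sub_one_eq_one hx, one_pow, one_mul]
  have nonzeroN : ∀ u v : (ZMod p)ˣ,
      ((u : ZMod p)^2 - (u : ZMod p)*(v : ZMod p) + (v : ZMod p)^2) ≠ 0 := by
    intro u v h0
    have h1 : (u : ZMod p)^3 + (v : ZMod p)^3 = 0 := by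
      linear_combination ((u : ZMod p) + (v : ZMod p)) * h0
    have hcube : (u : ZMod p)^3 = (-(v : ZMod p))^3 := by
      rw [Odd.neg_pow (⟨1, by norm_num⟩ : Odd 3)]
      linear_combination h1
    have huv : (u : ZMod p) = -(v : ZMod p) := by
      have e1 : ((u : ZMod p)^3)^m = (u : ZMod p) := hpowK _ u.ne_zero
      have e2 : ((-(v : ZMod p))^3)^m = -(v : ZMod p) :=
        hpowK _ (neg_ne_zero.mpr v.ne_zero)
      rw [← e1, ← e2, hcube]
    have h3v : (3 : ZMod p) * (v : ZMod p)^2 = 0 := by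
      rw [huv] at h0
      linear_combination h0
    rcases mul_eq_zero.1 h3v with h | h
    · exact h3' h
    · exact pow_ne_zero 2 v.ne_zero h
  -- the equivalence between Fin (p-1) and units of ZMod p
  have hco : ∀ i : Fin (p-1), Nat.Coprime ((i : ℕ)+1) p := by
    intro i
    have hi := i.isLt
    apply Nat.Coprime.symm
    rw [Nat.Prime.coprime_iff_not_dvd (Fact.out : p.Prime)]
    intro hdvd
    have := Nat.le_of_dvd (by omega) hdvd
    omega
  set f : Fin (p-1) → (ZMod p)ˣ := fun i => ZMod.unitOfCoprime ((i : ℕ)+1) (hco i) with hf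
  have hval : ∀ i : Fin (p-1), ((f i : (ZMod p)ˣ) : ZMod p) = (((i : ℕ)+1 : ℕ) : ZMod p) := by
    intro i; rw [hf]; exact ZMod.coe_unitOfCoprime _ _
  have hinj : Function.Injective f := by
    intro i j hij
    have h1 : (((i : ℕ)+1 : ℕ) : ZMod p) = (((j : ℕ)+1 : ℕ) : ZMod p) := by
      rw [← hval i, ← hval j, hij]
    have h2' := congrArg ZMod.val h1
    rw [ZMod.val_cast_of_lt (by omega : (i : ℕ)+1 < p),
      ZMod.val_cast_of_lt (by omega : (j : ℕ)+1 < p)] at h2'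
    exact Fin.ext (by omega)
  have hbij : Function.Bijective f := by
    rw [Fintype.bijective_iff_injective_and_card]
    exact ⟨hinj, by rw [Fintype.card_fin, ZMod.card_units]⟩
  set e : Fin (p-1) ≃ (ZMod p)ˣ := Equiv.ofBijective f hbij with he
  have heval : ∀ i : Fin (p-1), ((e i : (ZMod p)ˣ) : ZMod p) = ((i : ℕ) : ZMod p) + 1 := by
    intro i
    have : e i = f i := rfl
    rw [this, hval i]
    push_cast
    ring
  -- integer entries and clearing denominators
  set z : Fin (p-1) → Fin (p-1) → ℤ := fun i j =>
      ((((i : ℕ) + 1 : ℕ) ^ 2 - ((i : ℕ) + 1) * ((j : ℕ) + 1) + ((j : ℕ) + 1) ^ 2 : ℤ)) with hzdef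
  have hAz : ∀ i j, A i j = 1 / ((z i j : ℤ) : ℚ) := fun i j => rfl
  have hzval : ∀ i j, ((z i j : ℤ) : ZMod p)
      = ((e i : ZMod p))^2 - (e i : ZMod p)*(e j : ZMod p) + ((e j : ZMod p))^2 := by
    intro i j
    rw [hzdef]
    push_cast
    rw [heval i, heval j]
    try ring
  have hzK : ∀ i j, ((z i j : ℤ) : ZMod p) ≠ 0 := by
    intro i j
    rw [hzval i j]
    exact nonzeroN (e i) (e j)
  have hz0 : ∀ i j, z i j ≠ 0 := by
    intro i j h
    exact hzK i j (by rw [h]; simp)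
  set P : ℤ := ∏ i : Fin (p-1), ∏ j : Fin (p-1), z i j with hP
  have hdvd : ∀ i j, z i j ∣ P := by
    intro i j
    rw [hP]
    exact dvd_trans (Finset.dvd_prod_of_mem _ (Finset.mem_univ j))
      (Finset.dvd_prod_of_mem (fun i => ∏ j, z i j) (Finset.mem_univ i))
  have hPK : ((P : ℤ) : ZMod p) ≠ 0 := by
    rw [hP]
    push_cast
    exact Finset.prod_ne_zero_iff.2 (fun i _ => Finset.prod_ne_zero_iff.2 (fun j _ => hzK i j))
  have hP0 : P ≠ 0 := by
    intro h
    exact hPK (by rw [h]; simp)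
  set C : Matrix (Fin (p-1)) (Fin (p-1)) ℤ := Matrix.of fun i j => P / z i j with hC
  have hCQ : C.map ((Int.cast) : ℤ → ℚ) = ((P : ℤ) : ℚ) • A := by
    ext i j
    simp only [Matrix.map_apply, Matrix.smul_apply, smul_eq_mul, hC, Matrix.of_apply]
    rw [hAz i j]
    obtain ⟨k, hk⟩ := hdvd i j
    rw [hk, Int.mul_ediv_cancel_left _ (hz0 i j)]
    have hzQ : ((z i j : ℤ) : ℚ) ≠ 0 := Int.cast_ne_zero.2 (hz0 i j)
    push_cast
    field_simp
  have hCK : C.map ((Int.cast) : ℤ → ZMod p) = ((P : ℤ) : ZMod p) • (N.submatrix e e) := by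
    ext i j
    simp only [Matrix.map_apply, Matrix.smul_apply, smul_eq_mul, hC, Matrix.of_apply,
      Matrix.submatrix_apply, hN]
    rw [← hzval i j]
    obtain ⟨k, hk⟩ := hdvd i j
    rw [hk, Int.mul_ediv_cancel_left _ (hz0 i j), Int.cast_mul,
      mul_comm ((z i j : ℤ) : ZMod p) ((k : ℤ) : ZMod p), mul_assoc,
      mul_inv_cancel₀ (hzK i j), mul_one]
  have hdetCQ : ((C.det : ℤ) : ℚ) = ((P : ℤ) : ℚ)^(p-1) * A.det := by
    have h1 := RingHom.map_det (Int.castRingHom ℚ) C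
    simp only [RingHom.mapMatrix_apply, Int.coe_castRingHom] at h1
    rw [h1, hCQ, Matrix.det_smul, Fintype.card_fin]
  have hdetCK : ((C.det : ℤ) : ZMod p) = ((P : ℤ) : ZMod p)^(p-1) * N.det := by
    have h1 := RingHom.map_det (Int.castRingHom (ZMod p)) C
    simp only [RingHom.mapMatrix_apply, Int.coe_castRingHom] at h1
    rw [h1, hCK, Matrix.det_smul, Fintype.card_fin, Matrix.det_submatrix_equiv_self]
  have hPpow0 : (P:ℤ)^(p-1) ≠ 0 := pow_ne_zero _ hP0
  have hfrac : (2 * A.det : ℚ) = ((2 * C.det : ℤ) : ℚ) / (((P^(p-1) : ℤ)) : ℚ) := by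
    have hPQne : ((P^(p-1) : ℤ) : ℚ) ≠ 0 := Int.cast_ne_zero.2 hPpow0
    rw [eq_div_iff hPQne]
    push_cast
    push_cast at hdetCQ
    linear_combination (-2:ℚ) * hdetCQ
  have hpPn : ¬ ((p:ℤ) ∣ P^(p-1)) := by
    intro hdvd'
    have := Int.Prime.dvd_pow' (Fact.out : p.Prime) hdvd'
    rw [← ZMod.intCast_zmod_eq_zero_iff_dvd] at this
    exact hPK this
  have hcast : ((2 * A.det : ℚ) : ZMod p) = 2 * N.det := by
    rw [hfrac]
    rw [S18.ratCast_div p _ _ hpPn]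
    push_cast
    push_cast at hdetCK
    rw [hdetCK]
    have hPne : ((P : ℤ) : ZMod p)^(p-1) ≠ 0 := pow_ne_zero _ hPK
    push_cast at hPne
    field_simp
  have hdetN := S18.detN_eq m hp hm hmodd
  rw [← hN] at hdetN
  -- final square analysis
  set X : ZMod p := (2 * (3 : ZMod p)⁻¹)^((p-1)/2) with hX
  set Y : ZMod p := (-(2 : ZMod p)⁻¹)^((m-1)/2) with hY
  have hXpow : (2 * (3 : ZMod p)⁻¹)^(p-1) = X^2 := by
    rw [hX, ← pow_mul]
    congr 1
    omega
  have hYpow : (-(2 : ZMod p)⁻¹)^m = Y^2 * (-(2 : ZMod p)⁻¹) := by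
    rw [hY, ← pow_mul, ← pow_succ]
    congr 1
    omega
  have h22 : (2 : ZMod p) * (2 : ZMod p)⁻¹ = 1 := mul_inv_cancel₀ h2
  have hmain : ((2 * A.det : ℚ) : ZMod p)
      = (-1 : ZMod p)^((p-1)/2 + 1) * (X * Y)^2 := by
    rw [hcast, hdetN, hXpow, hYpow, pow_succ]
    linear_combination (-((-1 : ZMod p)^((p-1)/2) * X^2 * Y^2)) * h22
  have hXne : X ≠ 0 := pow_ne_zero _ (mul_ne_zero h2 (inv_ne_zero h3'))
  have hYne : Y ≠ 0 := pow_ne_zero _ (neg_ne_zero.mpr (inv_ne_zero h2))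
  have hXYne : X * Y ≠ 0 := mul_ne_zero hXne hYne
  have hp4 : p % 4 = 1 ∨ p % 4 = 3 := by omega
  rcases hp4 with hp4 | hp4
  · -- p ≡ 1 mod 4 : -1 is a square
    obtain ⟨r, hr⟩ := (ZMod.exists_sq_eq_neg_one_iff (p := p)).mpr (by omega)
    have hrne : r ≠ 0 := by
      intro h0
      rw [h0, mul_zero] at hr
      exact (neg_ne_zero.mpr (one_ne_zero : (1 : ZMod p) ≠ 0)) hr
    refine ⟨r * (X * Y), mul_ne_zero hrne hXYne, ?_⟩
    rw [hmain]
    have hodd' : Odd ((p-1)/2 + 1) := Nat.odd_iff.mpr (by omega)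
    rw [hodd'.neg_one_pow]
    linear_combination ((X*Y)^2) * hr
  · -- p ≡ 3 mod 4
    refine ⟨X * Y, hXYne, ?_⟩
    rw [hmain]
    have hev : Even ((p-1)/2 + 1) := Nat.even_iff.mpr (by omega)
    rw [hev.neg_one_pow, one_mul]
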